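/- arXiv:1712.06529 — 2 statements merged into one kernel-verified Lean document; each statement's English description precedes it below -/
import Mathlib

section
/- Suppose the trapping probabilities satisfy p_x ≥ p for all x ≠ o, for some p > 0. Then there exists a constant c = c(p,q) > 0 such that for all n ≥ 1, the annealed survival probability satisfies P_o(T(ω) > n) ≤ e^{-cn}. -/
open MeasureTheory ProbabilityTheory Finset
open scoped ENNReal

/-- One step of the simple random walk on the `q`-ary tree (vertices: words over `Fin q`, root =
empty word), driven by a uniform random seed `u`: at the root (degree `q`) move to child `u % q`;
at any other vertex (degree `q+1`) move to child `u % (q+1)` if `u % (q+1) < q`, and to the parent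
otherwise. -/
def treeStep (q : ℕ) (v : List (Fin q)) (u : ℕ) : List (Fin q) :=
  match v with
  | [] => if h : u % q < q then [⟨u % q, h⟩] else []
  | a :: t => if h : u % (q + 1) < q then ⟨u % (q + 1), h⟩ :: a :: t else t

/-- The simple random walk path on the `q`-ary tree started at the root. -/
def treeWalk (q : ℕ) (u : ℕ → ℕ) : ℕ → List (Fin q)
  | 0 => []
  | n + 1 => treeStep q (treeWalk q u n) (u n)

/-- The survival time `T(ω) = inf {k ≥ 0 : ω(S_k) = 1}` of the walk among the traps `τ`,
as an element of `[0,∞]` (it equals `∞` if no trap is ever visited). -/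
noncomputable def treeHit (q : ℕ) (τ : List (Fin q) → Bool) (u : ℕ → ℕ) : ℝ≥0∞ :=
  sInf {t : ℝ≥0∞ | ∃ k : ℕ, t = (k : ℝ≥0∞) ∧ τ (treeWalk q u k) = true}

namespace SurvAux

instance measListFin (q : ℕ) : MeasurableSpace (List (Fin q)) := ⊤
instance (q : ℕ) : MeasurableSingletonClass (List (Fin q)) :=
  ⟨fun _ => MeasurableSpace.measurableSet_top⟩

lemma treeWalk_congr {q : ℕ} (u u' : ℕ → ℕ) : ∀ n, (∀ k, k < n → u k = u' k) →
    treeWalk q u n = treeWalk q u' n := by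
  intro n
  induction n with
  | zero => intro _; rfl
  | succ n ih =>
    intro h
    show treeStep q (treeWalk q u n) (u n) = treeStep q (treeWalk q u' n) (u' n)
    rw [ih (fun k hk => h k (hk.trans (Nat.lt_succ_self n))), h n (Nat.lt_succ_self n)]

lemma walk_drop {q : ℕ} (u : ℕ → ℕ) : ∀ n j, ∃ i ≤ n, treeWalk q u i = (treeWalk q u n).drop j := by
  intro n
  induction n with
  | zero => intro j; exact ⟨0, le_refl 0, by simp [treeWalk]⟩
  | succ n ih =>
    intro j
    have hstep : treeWalk q u (n+1) = treeStep q (treeWalk q u n) (u n) := rfl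
    rcases hw : treeWalk q u n with _ | ⟨a, t⟩ <;> rw [hw] at hstep
    · by_cases h : u n % q < q
      · have hs2 : treeStep q ([] : List (Fin q)) (u n) = [⟨u n % q, h⟩] := by
          simp [treeStep, h]
        rw [hs2] at hstep
        cases j with
        | zero => exact ⟨n+1, le_rfl, by rw [hstep]; simp⟩
        | succ j => exact ⟨0, Nat.zero_le _, by rw [hstep]; simp [treeWalk]⟩
      · have hs2 : treeStep q ([] : List (Fin q)) (u n) = [] := by
          simp [treeStep, h]
        rw [hs2] at hstep
        exact ⟨0, Nat.zero_le _, by rw [hstep]; simp [treeWalk]⟩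
    · by_cases h : u n % (q+1) < q
      · have hs2 : treeStep q (a::t) (u n) = ⟨u n % (q+1), h⟩ :: a :: t := by
          simp [treeStep, h]
        rw [hs2] at hstep
        cases j with
        | zero => exact ⟨n+1, le_rfl, by rw [hstep]; simp⟩
        | succ j =>
          obtain ⟨i, hi, he⟩ := ih j
          exact ⟨i, hi.trans (Nat.le_succ n), by
            rw [hstep, show List.drop (j+1) (⟨u n % (q+1), h⟩ :: a :: t) = List.drop j (a::t)
              from rfl, ← hw]; exact he⟩
      · have hs2 : treeStep q (a::t) (u n) = t := by
          simp [treeStep, h]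
        rw [hs2] at hstep
        obtain ⟨i, hi, he⟩ := ih (j + 1)
        refine ⟨i, hi.trans (Nat.le_succ n), ?_⟩
        rw [hstep, show List.drop j t = List.drop (j+1) (a::t) from rfl, ← hw]
        exact he

lemma sum_mod (F : ℕ → ℝ≥0∞) (b : ℕ) : ∀ a, ∑ i ∈ range (a * b), F (i % b)
    = a * ∑ j ∈ range b, F j := by
  intro a
  induction a with
  | zero => simp
  | succ a ih =>
    rw [Nat.succ_mul, Finset.range_add, Finset.sum_union (by
      simp only [Finset.disjoint_left, Finset.mem_range, Finset.mem_map, addLeftEmbedding_apply]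
      rintro x hx ⟨y, hy, rfl⟩
      omega), ih]
    have h2 : ∑ i ∈ (range b).map (addLeftEmbedding (a*b)), F (i % b) = ∑ j ∈ range b, F j := by
      rw [Finset.sum_map]
      refine Finset.sum_congr rfl (fun j hj => ?_)
      have : (a * b + j) % b = j := by
        rw [Nat.add_comm, Nat.add_mul_mod_self_right]
        exact Nat.mod_eq_of_lt (Finset.mem_range.mp hj)
      simp [addLeftEmbedding_apply, this]
    rw [h2]
    push_cast
    ring

lemma measurable_walk {Ω₁ : Type} [MeasurableSpace Ω₁] {q m : ℕ}
    (U : ℕ → Ω₁ → Fin m) (hU : ∀ n, Measurable (U n)) (n : ℕ) :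
    Measurable (fun ω => treeWalk q (fun k => (U k ω : ℕ)) n) := by
  induction n with
  | zero => exact measurable_const
  | succ n ih =>
    have h : (fun ω => treeWalk q (fun k => (U k ω : ℕ)) (n+1))
        = (fun pr : List (Fin q) × Fin m => treeStep q pr.1 (pr.2 : ℕ))
          ∘ (fun ω => (treeWalk q (fun k => (U k ω : ℕ)) n, U n ω)) := rfl
    rw [h]
    exact Measurable.of_discrete.comp (ih.prodMk (hU n))

lemma real_facts (q : ℕ) (hq : 2 ≤ q) (p : ℝ) (hp : 0 < p) (hp1 : p < 1) :
    ∃ b ρ : ℝ, 0 < b ∧ b < 1 ∧ 1 - p ≤ b ∧ b ≤ ρ ∧ 0 < ρ ∧ ρ < 1 ∧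
      (q:ℝ) * (q:ℝ) * b^2 + q = q * (q+1) * ρ * b := by
  have hq' : (2:ℝ) ≤ q := by exact_mod_cast hq
  have hqpos : (0:ℝ) < q := by linarith
  have hs0 : 0 < Real.sqrt q := Real.sqrt_pos.mpr hqpos
  have hs : 1 < Real.sqrt q := by
    rw [show (1:ℝ) = Real.sqrt 1 from (Real.sqrt_one).symm]
    exact Real.sqrt_lt_sqrt (by norm_num) (by linarith)
  have hsq : Real.sqrt q * Real.sqrt q = q := Real.mul_self_sqrt hqpos.le
  set b : ℝ := max (1 - p) (Real.sqrt q)⁻¹ with hbdef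
  have hb0 : 0 < b := lt_max_of_lt_right (inv_pos.mpr hs0)
  have hb1 : b < 1 := max_lt (by linarith) (inv_lt_one_of_one_lt₀ hs)
  have hbs : (Real.sqrt q)⁻¹ ≤ b := le_max_right _ _
  have hinv : (Real.sqrt q)⁻¹ * Real.sqrt q = 1 := inv_mul_cancel₀ hs0.ne'
  have h1 : 1 ≤ b * Real.sqrt q := by
    calc (1:ℝ) = (Real.sqrt q)⁻¹ * Real.sqrt q := hinv.symm
    _ ≤ b * Real.sqrt q := by nlinarith
  have hqb : 1 < (q:ℝ) * b := by nlinarith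
  have hbinv : b * b⁻¹ = 1 := mul_inv_cancel₀ hb0.ne'
  set ρ : ℝ := ((q:ℝ) * b + b⁻¹) / (q + 1) with hrdef
  have hden : (0:ℝ) < q + 1 := by linarith
  have hbiv0 : 0 < b⁻¹ := inv_pos.mpr hb0
  have hρ0 : 0 < ρ := div_pos (by nlinarith) hden
  have key : (q:ℝ) * b^2 + 1 < (q+1)*b := by nlinarith
  have hmul : ((q:ℝ) * b + b⁻¹) * b = q * b^2 + 1 := by field_simp
  have hρ1 : ρ < 1 := by
    rw [hrdef, div_lt_one hden, ← mul_lt_mul_iff_left₀ hb0, hmul]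
    exact key
  have hbρ : b ≤ ρ := by
    rw [hrdef, le_div_iff₀ hden]
    nlinarith
  refine ⟨b, ρ, hb0, hb1, le_max_left _ _, hbρ, hρ0, hρ1, ?_⟩
  rw [hrdef]
  field_simp

end SurvAux

open SurvAux

/-- If the trapping probabilities satisfy `p_x ≥ p` for all `x ≠ o`, for some
`p > 0`, then there exists a constant `c = c(p,q) > 0` such that for all `n ≥ 1` the annealed
survival probability satisfies `P_o(T(ω) > n) ≤ e^{-cn}`.  The annealed law is the product of the
law `P₁` of the driving seeds of the walk (i.i.d. uniform) with the law `P₂` of the trap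
configuration (independent over vertices, no trap at the root, trap at `x ≠ o` with
probability `px x ≥ p`). -/
theorem annealed_survival_exponential_bound (q : ℕ) (hq : 2 ≤ q)
    (p : ℝ) (hp : 0 < p) (hp1 : p < 1) :
    ∃ c : ℝ, 0 < c ∧
      ∀ (px : List (Fin q) → ℝ), (∀ x, x ≠ ([] : List (Fin q)) → p ≤ px x) → (∀ x, px x ≤ 1) →
      ∀ (Ω₁ : Type) (_ : MeasurableSpace Ω₁) (P₁ : Measure Ω₁), IsProbabilityMeasure P₁ →
      ∀ (U : ℕ → Ω₁ → Fin (q * (q + 1))),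
        (∀ n, Measurable (U n)) →
        iIndepFun U P₁ →
        (∀ n i, P₁ {ω | U n ω = i} = ((q * (q + 1) : ℕ) : ℝ≥0∞)⁻¹) →
      ∀ (Ω₂ : Type) (_ : MeasurableSpace Ω₂) (P₂ : Measure Ω₂), IsProbabilityMeasure P₂ →
      ∀ (τ : List (Fin q) → Ω₂ → Bool),
        (∀ x, Measurable (τ x)) →
        iIndepFun τ P₂ →
        (∀ ω, τ [] ω = false) →
        (∀ x, x ≠ ([] : List (Fin q)) → P₂ {ω | τ x ω = true} = ENNReal.ofReal (px x)) →
      ∀ n : ℕ, 1 ≤ n →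
        (P₁.prod P₂) {ω | (n : ℝ≥0∞) <
            treeHit q (fun x => τ x ω.2) (fun k => (U k ω.1 : ℕ))} ≤
          ENNReal.ofReal (Real.exp (-c * n)) := by
  obtain ⟨b, ρ, hb0, hb1, hpb, hbρ, hρ0, hρ1, hiden⟩ := real_facts q hq p hp hp1
  refine ⟨-Real.log ρ, by have := Real.log_neg hρ0 hρ1; linarith, ?_⟩
  intro px hpxp hpx1 Ω₁ mΩ₁ P₁ hP₁ U hUmeas hUindep hUdist Ω₂ mΩ₂ P₂ hP₂ τ hτmeas hτindep hτroot
    hτdist n hn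
  set βe : ℝ≥0∞ := ENNReal.ofReal b with hβe
  set ρe : ℝ≥0∞ := ENNReal.ofReal ρ with hρe
  have hβρ : βe ≤ ρe := ENNReal.ofReal_le_ofReal hbρ
  have hm'pos : 0 < q * (q + 1) := by positivity
  -- the walk
  set W : ℕ → Ω₁ → List (Fin q) := fun k ω₁ => treeWalk q (fun j => (U j ω₁ : ℕ)) k with hWdef
  have hWmeas : ∀ k, Measurable (W k) := fun k => measurable_walk U hUmeas k
  -- Step: pointwise sum bound
  have hiden' : (q : ℝ≥0∞) * q * βe^2 + q = ((q*(q+1) : ℕ) : ℝ≥0∞) * ρe * βe := by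
    have e1 : (q : ℝ≥0∞) * q * βe^2 + q
        = ENNReal.ofReal ((q:ℝ) * (q:ℝ) * b^2 + (q:ℝ)) := by
      rw [ENNReal.ofReal_add (by positivity) (by positivity),
        ENNReal.ofReal_mul (by positivity), ENNReal.ofReal_mul (by positivity),
        ENNReal.ofReal_pow hb0.le, ENNReal.ofReal_natCast, hβe]
    have e2 : ((q*(q+1) : ℕ) : ℝ≥0∞) * ρe * βe
        = ENNReal.ofReal (((q*(q+1) : ℕ) : ℝ) * ρ * b) := by
      rw [ENNReal.ofReal_mul (by positivity), ENNReal.ofReal_mul (by positivity),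
        ENNReal.ofReal_natCast, hβe, hρe]
    rw [e1, e2]
    refine congrArg ENNReal.ofReal ?_
    push_cast
    linarith [hiden]
  have sumstep : ∀ v : List (Fin q),
      ∑ i : Fin (q*(q+1)), βe ^ (treeStep q v (i : ℕ)).length
        ≤ ((q*(q+1) : ℕ) : ℝ≥0∞) * ρe * βe ^ v.length := by
    intro v
    match v with
    | [] =>
      have hlen : ∀ i : Fin (q*(q+1)), (treeStep q ([] : List (Fin q)) (i:ℕ)).length = 1 := by
        intro i
        simp [treeStep, Nat.mod_lt _ (by omega : 0 < q)]
      calc ∑ i : Fin (q*(q+1)), βe ^ (treeStep q ([] : List (Fin q)) (i:ℕ)).length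
          = ∑ _i : Fin (q*(q+1)), βe ^ 1 := Finset.sum_congr rfl fun i _ => by rw [hlen i]
        _ = ((q*(q+1) : ℕ) : ℝ≥0∞) * βe := by
            simp [Finset.sum_const, Finset.card_univ, nsmul_eq_mul, pow_one]
        _ ≤ ((q*(q+1) : ℕ) : ℝ≥0∞) * ρe * βe ^ (List.length ([] : List (Fin q))) := by
            simp only [List.length_nil, pow_zero, mul_one, pow_one]
            exact mul_le_mul_right hβρ _
    | a :: t =>
      set L := t.length with hL
      set F : ℕ → ℝ≥0∞ := fun r => if r < q then βe^(L+2) else βe^L with hF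
      have h2 : ∀ i : ℕ, βe ^ (treeStep q (a::t) i).length = F (i % (q+1)) := by
        intro i
        by_cases h : i % (q+1) < q <;> simp [treeStep, h, hF, hL]
      refine le_of_eq ?_
      calc ∑ i : Fin (q*(q+1)), βe ^ (treeStep q (a::t) (i:ℕ)).length
          = ∑ i ∈ range (q*(q+1)), βe ^ (treeStep q (a::t) i).length :=
            Fin.sum_univ_eq_sum_range (fun j => βe ^ (treeStep q (a::t) j).length) (q*(q+1))
        _ = ∑ i ∈ range (q * (q+1)), F (i % (q+1)) := by
            exact Finset.sum_congr rfl fun i _ => h2 i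
        _ = (q : ℝ≥0∞) * ∑ j ∈ range (q+1), F j := sum_mod F (q+1) q
        _ = (q : ℝ≥0∞) * ((q : ℝ≥0∞) * βe^(L+2) + βe^L) := by
            rw [Finset.sum_range_succ]
            have hin : ∑ j ∈ range q, F j = (q : ℝ≥0∞) * βe^(L+2) := by
              have hc : ∀ j ∈ range q, F j = βe^(L+2) := fun j hj => by
                simp only [hF]
                rw [if_pos (Finset.mem_range.mp hj)]
              rw [Finset.sum_congr rfl hc, Finset.sum_const, Finset.card_range, nsmul_eq_mul]
            have hq2 : F q = βe^L := by
              simp only [hF]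
              rw [if_neg (lt_irrefl q)]
            rw [hin, hq2]
        _ = ((q : ℝ≥0∞) * q * βe^2 + q) * βe^L := by ring
        _ = (((q*(q+1) : ℕ) : ℝ≥0∞) * ρe * βe) * βe^L := by rw [hiden']
        _ = ((q*(q+1) : ℕ) : ℝ≥0∞) * ρe * βe ^ (L+1) := by ring
        _ = ((q*(q+1) : ℕ) : ℝ≥0∞) * ρe * βe ^ (List.length (a::t)) := by
            rw [List.length_cons]
  -- Step: exponential moment bound by induction
  have key : ∀ N : ℕ, (∫⁻ ω, βe ^ (W N ω).length ∂P₁) ≤ ρe ^ N := by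
    intro N
    induction N with
    | zero =>
      simp [hWdef, treeWalk, lintegral_const]
    | succ N ih =>
      have hXmeas : Measurable (fun ω (j : (range N : Finset ℕ)) => U j ω) :=
        measurable_pi_lambda _ (fun j => hUmeas j)
      have hYmeas : Measurable (fun ω (j : ({N} : Finset ℕ)) => U j ω) :=
        measurable_pi_lambda _ (fun j => hUmeas j)
      have hindepXY : IndepFun (fun ω (j : (range N : Finset ℕ)) => U j ω)
          (fun ω (j : ({N} : Finset ℕ)) => U j ω) P₁ :=
        hUindep.indepFun_finset (range N) {N} (by simp) hUmeas
      have hGmeas : ∀ i : Fin (q*(q+1)),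
          Measurable (fun ω => βe ^ (treeStep q (W N ω) (i:ℕ)).length) := fun i =>
        (Measurable.of_discrete
          (f := fun v : List (Fin q) => βe ^ (treeStep q v (i:ℕ)).length)).comp (hWmeas N)
      have main_i : ∀ i : Fin (q*(q+1)),
          (∫⁻ ω, (βe ^ (treeStep q (W N ω) (i:ℕ)).length)
              * (if U N ω = i then 1 else 0) ∂P₁)
          = (∫⁻ ω, βe ^ (treeStep q (W N ω) (i:ℕ)).length ∂P₁) * ((q*(q+1) : ℕ) : ℝ≥0∞)⁻¹ := by
        intro i
        set φ : (↥(range N) → Fin (q*(q+1))) → ℝ≥0∞ := fun vs =>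
          βe ^ (treeStep q
            (treeWalk q (fun k => if h : k ∈ range N then (vs ⟨k, h⟩ : ℕ) else 0) N)
            (i:ℕ)).length with hφ
        set ψ : (↥({N} : Finset ℕ) → Fin (q*(q+1))) → ℝ≥0∞ := fun ys =>
          if ys ⟨N, Finset.mem_singleton_self N⟩ = i then 1 else 0 with hψ
        have hφX : ∀ ω, φ (fun j : (range N : Finset ℕ) => U j ω)
            = βe ^ (treeStep q (W N ω) (i:ℕ)).length := by
          intro ω
          have hcg := treeWalk_congr (q := q)
            (fun k => if h : k ∈ range N then (U k ω : ℕ) else 0)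
            (fun k => (U k ω : ℕ)) N
            (fun k hk => by simp [Finset.mem_range.mpr hk])
          rw [hφ]
          simp only [hcg, hWdef]
        have hind : IndepFun (φ ∘ fun ω (j : (range N : Finset ℕ)) => U j ω)
            (ψ ∘ fun ω (j : ({N} : Finset ℕ)) => U j ω) P₁ :=
          hindepXY.comp Measurable.of_discrete Measurable.of_discrete
        have heq : (fun ω => (βe ^ (treeStep q (W N ω) (i:ℕ)).length)
              * (if U N ω = i then 1 else 0))
            = ((φ ∘ fun ω (j : (range N : Finset ℕ)) => U j ω)
              * (ψ ∘ fun ω (j : ({N} : Finset ℕ)) => U j ω)) := by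
          funext ω
          simp only [Pi.mul_apply, Function.comp_apply, hφX ω, hψ]
        have hint : (∫⁻ ω, (βe ^ (treeStep q (W N ω) (i:ℕ)).length)
              * (if U N ω = i then 1 else 0) ∂P₁)
            = (∫⁻ ω, φ (fun j : (range N : Finset ℕ) => U j ω) ∂P₁)
              * ∫⁻ ω, ψ (fun j : ({N} : Finset ℕ) => U j ω) ∂P₁ := by
          rw [show (∫⁻ ω, (βe ^ (treeStep q (W N ω) (i:ℕ)).length)
              * (if U N ω = i then 1 else 0) ∂P₁)
            = ∫⁻ ω, ((φ ∘ fun ω (j : (range N : Finset ℕ)) => U j ω)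
              * (ψ ∘ fun ω (j : ({N} : Finset ℕ)) => U j ω)) ω ∂P₁ from by rw [← heq]]
          exact lintegral_mul_eq_lintegral_mul_lintegral_of_indepFun
            (Measurable.of_discrete.comp hXmeas) (Measurable.of_discrete.comp hYmeas) hind
        rw [hint]
        congr 1
        · exact lintegral_congr fun ω => hφX ω
        · have hψval : (fun ω => ψ (fun j : ↥({N} : Finset ℕ) => U j ω))
              = (U N ⁻¹' {i}).indicator (1 : Ω₁ → ℝ≥0∞) := by
            funext ω
            rw [hψ]
            by_cases h : U N ω = i <;>
              simp [Set.indicator_apply, Set.mem_preimage, h]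
          rw [hψval, lintegral_indicator_one ((hUmeas N) (measurableSet_singleton i))]
          have hpre : U N ⁻¹' {i} = {ω | U N ω = i} := by
            ext ω; simp
          rw [hpre, hUdist N i]
      calc (∫⁻ ω, βe ^ (W (N+1) ω).length ∂P₁)
          = ∫⁻ ω, ∑ i : Fin (q*(q+1)), (βe ^ (treeStep q (W N ω) (i:ℕ)).length)
              * (if U N ω = i then 1 else 0) ∂P₁ := by
            refine lintegral_congr fun ω => ?_
            have hsum : ∑ i : Fin (q*(q+1)), (βe ^ (treeStep q (W N ω) (i:ℕ)).length)
                * (if U N ω = i then 1 else 0)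
                = βe ^ (treeStep q (W N ω) ((U N ω : Fin (q*(q+1))) : ℕ)).length := by
              simp only [mul_ite, mul_one, mul_zero]
              exact Fintype.sum_ite_eq (U N ω) (fun i => βe ^ (treeStep q (W N ω) (i:ℕ)).length)
            rw [hsum]
            rfl
        _ = ∑ i : Fin (q*(q+1)), (∫⁻ ω, (βe ^ (treeStep q (W N ω) (i:ℕ)).length)
              * (if U N ω = i then 1 else 0) ∂P₁) := by
            refine lintegral_finset_sum _ fun i _ => ((hGmeas i).mul ?_)
            exact (Measurable.of_discrete
              (f := fun x : Fin (q*(q+1)) => if x = i then (1:ℝ≥0∞) else 0)).comp (hUmeas N)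
        _ = ∑ i : Fin (q*(q+1)), (∫⁻ ω, βe ^ (treeStep q (W N ω) (i:ℕ)).length ∂P₁)
              * ((q*(q+1) : ℕ) : ℝ≥0∞)⁻¹ :=
            Finset.sum_congr rfl fun i _ => main_i i
        _ = (∫⁻ ω, ∑ i : Fin (q*(q+1)), βe ^ (treeStep q (W N ω) (i:ℕ)).length ∂P₁)
              * ((q*(q+1) : ℕ) : ℝ≥0∞)⁻¹ := by
            rw [← Finset.sum_mul, ← lintegral_finset_sum _ fun i _ => hGmeas i]
        _ ≤ (∫⁻ ω, ((q*(q+1) : ℕ) : ℝ≥0∞) * ρe * βe ^ (W N ω).length ∂P₁)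
              * ((q*(q+1) : ℕ) : ℝ≥0∞)⁻¹ := by
            refine mul_le_mul_left (lintegral_mono fun ω => sumstep (W N ω)) _
        _ = ((q*(q+1) : ℕ) : ℝ≥0∞) * ρe * (∫⁻ ω, βe ^ (W N ω).length ∂P₁)
              * ((q*(q+1) : ℕ) : ℝ≥0∞)⁻¹ := by
            have hWlen : Measurable fun ω => βe ^ (W N ω).length :=
              (Measurable.of_discrete
                (f := fun v : List (Fin q) => βe ^ v.length)).comp (hWmeas N)
            rw [lintegral_const_mul _ hWlen]
        _ = ρe * (∫⁻ ω, βe ^ (W N ω).length ∂P₁)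
              * (((q*(q+1) : ℕ) : ℝ≥0∞) * ((q*(q+1) : ℕ) : ℝ≥0∞)⁻¹) := by ring
        _ = ρe * (∫⁻ ω, βe ^ (W N ω).length ∂P₁) := by
            rw [ENNReal.mul_inv_cancel (by exact_mod_cast hm'pos.ne') (ENNReal.natCast_ne_top _), mul_one]
        _ ≤ ρe * ρe ^ N := mul_le_mul_right ih _
        _ = ρe ^ (N+1) := (pow_succ' ρe N).symm
  -- event rewriting
  set M : Set (Ω₁ × Ω₂) := {ω : Ω₁ × Ω₂ | (n : ℝ≥0∞) <
      treeHit q (fun x => τ x ω.2) (fun k => (U k ω.1 : ℕ))} with hM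
  have hM_eq : M = ⋂ k, ⋂ (_ : k ∈ Finset.range (n+1)),
      {ω : Ω₁ × Ω₂ | τ (W k ω.1) ω.2 = false} := by
    rw [hM]
    ext ω
    simp only [Set.mem_setOf_eq, Set.mem_iInter]
    constructor
    · intro hlt k hk
      by_contra hne
      have htrue : τ (W k ω.1) ω.2 = true := by
        cases hval : τ (W k ω.1) ω.2
        · exact absurd hval hne
        · rfl
      have hmem : ((k : ℕ) : ℝ≥0∞) ∈ {t : ℝ≥0∞ | ∃ j : ℕ, t = (j : ℝ≥0∞) ∧
          (fun x => τ x ω.2) (treeWalk q (fun l => (U l ω.1 : ℕ)) j) = true} :=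
        ⟨k, rfl, htrue⟩
      have hle : treeHit q (fun x => τ x ω.2) (fun l => (U l ω.1 : ℕ)) ≤ ((k : ℕ) : ℝ≥0∞) :=
        sInf_le hmem
      have hlt2 : (n : ℝ≥0∞) < (k : ℝ≥0∞) := lt_of_lt_of_le hlt hle
      have hlt3 : n < k := by exact_mod_cast hlt2
      have := Finset.mem_range.mp hk
      omega
    · intro hall
      refine lt_of_lt_of_le
        (ENNReal.lt_add_right (ENNReal.natCast_ne_top n) one_ne_zero) (le_sInf ?_)
      rintro t ⟨k, rfl, htrue⟩
      have hk : ¬ k ≤ n := by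
        intro hkn
        have hfalse := hall k (Finset.mem_range.mpr (Nat.lt_succ_of_le hkn))
        have htrue' : τ (W k ω.1) ω.2 = true := htrue
        rw [hfalse] at htrue'
        exact Bool.false_ne_true htrue'
      have hnk : n + 1 ≤ k := by omega
      calc (n : ℝ≥0∞) + 1 = ((n + 1 : ℕ) : ℝ≥0∞) := by push_cast; ring
        _ ≤ ((k : ℕ) : ℝ≥0∞) := by exact_mod_cast hnk
  -- measurability
  have hsec : MeasurableSet {pr : List (Fin q) × Ω₂ | τ pr.1 pr.2 = false} := by
    have hrw : {pr : List (Fin q) × Ω₂ | τ pr.1 pr.2 = false}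
        = ⋃ v : List (Fin q), ({v} : Set (List (Fin q))) ×ˢ (τ v ⁻¹' {false}) := by
      ext ⟨v, ω₂⟩
      constructor
      · intro h
        exact Set.mem_iUnion.mpr ⟨v, Set.mem_prod.mpr ⟨rfl, h⟩⟩
      · intro h
        obtain ⟨v', hv'⟩ := Set.mem_iUnion.mp h
        obtain ⟨hv1, hv2⟩ := Set.mem_prod.mp hv'
        have hvv : v = v' := hv1
        subst hvv
        exact hv2
    rw [hrw]
    exact MeasurableSet.iUnion fun v =>
      (measurableSet_singleton v).prod ((hτmeas v) (measurableSet_singleton false))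
  have hEk : ∀ k, MeasurableSet {ω : Ω₁ × Ω₂ | τ (W k ω.1) ω.2 = false} := by
    intro k
    have hmap : Measurable (fun ω : Ω₁ × Ω₂ => (W k ω.1, ω.2)) :=
      ((hWmeas k).comp measurable_fst).prodMk measurable_snd
    exact hmap hsec
  have hMmeas : MeasurableSet M := by
    rw [hM_eq]
    exact MeasurableSet.iInter fun k => MeasurableSet.iInter fun _ => hEk k
  have hprod : (P₁.prod P₂) M = ∫⁻ ω₁, P₂ (Prod.mk ω₁ ⁻¹' M) ∂P₁ :=
    Measure.prod_apply hMmeas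
  -- bounding the section measure
  have hsecbound : ∀ ω₁ : Ω₁, P₂ (Prod.mk ω₁ ⁻¹' M) ≤ βe ^ (W n ω₁).length := by
    intro ω₁
    set A : Finset (List (Fin q)) := (Finset.range (n+1)).image (fun k => W k ω₁) with hA
    have hsect : Prod.mk ω₁ ⁻¹' M = ⋂ x ∈ A, (τ x ⁻¹' {false}) := by
      rw [hM_eq]
      ext ω₂
      simp only [Set.mem_preimage, Set.mem_iInter, Set.mem_setOf_eq, Set.mem_singleton_iff]
      constructor
      · intro h x hx
        obtain ⟨k, hk, rfl⟩ := Finset.mem_image.mp hx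
        exact h k hk
      · intro h k hk
        exact h (W k ω₁) (Finset.mem_image_of_mem _ hk)
    have hPprod : P₂ (⋂ x ∈ A, τ x ⁻¹' {false}) = ∏ x ∈ A, P₂ (τ x ⁻¹' {false}) :=
      hτindep.meas_biInter (fun x _ => ⟨{false}, measurableSet_singleton false, rfl⟩)
    have hfle1 : ∀ x : List (Fin q), P₂ (τ x ⁻¹' {false}) ≤ 1 := fun x => prob_le_one
    have hfleβ : ∀ x : List (Fin q), x ≠ [] → P₂ (τ x ⁻¹' {false}) ≤ βe := by
      intro x hx
      have hcompl : τ x ⁻¹' {false} = (τ x ⁻¹' {true})ᶜ := by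
        ext ω₂; simp
      have h1 : P₂ (τ x ⁻¹' {true}) = ENNReal.ofReal (px x) := by
        have hss : τ x ⁻¹' {true} = {ω | τ x ω = true} := by ext ω₂; simp
        rw [hss]; exact hτdist x hx
      rw [hcompl, prob_compl_eq_one_sub ((hτmeas x) (measurableSet_singleton true)), h1]
      calc 1 - ENNReal.ofReal (px x) ≤ 1 - ENNReal.ofReal p :=
            tsub_le_tsub_left (ENNReal.ofReal_le_ofReal (hpxp x hx)) 1
        _ = ENNReal.ofReal (1 - p) := by
            rw [ENNReal.ofReal_sub _ hp.le, ENNReal.ofReal_one]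
        _ ≤ βe := ENNReal.ofReal_le_ofReal hpb
    set B : Finset (List (Fin q)) :=
      (Finset.range ((W n ω₁).length)).image (fun j => (W n ω₁).drop j) with hB
    have hBA : B ⊆ A := by
      intro x hx
      obtain ⟨j, hj, rfl⟩ := Finset.mem_image.mp hx
      obtain ⟨i, hi, he⟩ := walk_drop (fun l => (U l ω₁ : ℕ)) n j
      rw [hA]
      exact Finset.mem_image.mpr ⟨i, Finset.mem_range.mpr (Nat.lt_succ_of_le hi), he⟩
    have hcardB : B.card = (W n ω₁).length := by
      rw [hB, Finset.card_image_of_injOn, Finset.card_range]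
      intro j1 h1 j2 h2 hdrop
      have hlen := congrArg List.length hdrop
      simp only [List.length_drop] at hlen
      have h1' := Finset.mem_range.mp h1
      have h2' := Finset.mem_range.mp h2
      omega
    have hprodA : ∏ x ∈ A, P₂ (τ x ⁻¹' {false}) ≤ βe ^ (W n ω₁).length := by
      calc ∏ x ∈ A, P₂ (τ x ⁻¹' {false})
          = (∏ x ∈ A \ B, P₂ (τ x ⁻¹' {false})) * ∏ x ∈ B, P₂ (τ x ⁻¹' {false}) :=
            (Finset.prod_sdiff hBA).symm
        _ ≤ 1 * ∏ x ∈ B, P₂ (τ x ⁻¹' {false}) :=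
            mul_le_mul_left
              (Finset.prod_le_one (fun _ _ => zero_le) (fun x _ => hfle1 x)) _
        _ = ∏ x ∈ B, P₂ (τ x ⁻¹' {false}) := one_mul _
        _ ≤ ∏ _x ∈ B, βe := by
            refine Finset.prod_le_prod' (fun x hx => hfleβ x ?_)
            obtain ⟨j, hj, rfl⟩ := Finset.mem_image.mp hx
            have hj' := Finset.mem_range.mp hj
            intro hnil
            have hlen := congrArg List.length hnil
            simp only [List.length_drop, List.length_nil] at hlen
            omega
        _ = βe ^ B.card := Finset.prod_const βe
        _ = βe ^ (W n ω₁).length := by rw [hcardB]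
    rw [hsect, hPprod]
    exact hprodA
  calc (P₁.prod P₂) M = ∫⁻ ω₁, P₂ (Prod.mk ω₁ ⁻¹' M) ∂P₁ := hprod
    _ ≤ ∫⁻ ω₁, βe ^ (W n ω₁).length ∂P₁ := lintegral_mono hsecbound
    _ ≤ ρe ^ n := key n
    _ = ENNReal.ofReal (Real.exp (-(-Real.log ρ) * n)) := by
        rw [hρe, ← ENNReal.ofReal_pow hρ0.le]
        congr 1
        rw [neg_neg, mul_comm, Real.exp_nat_mul, Real.exp_log hρ0]
end

section
/- Suppose the trapping probabilities satisfy p_x ≥ p for all x ≠ o, for some p > 0. Then all moments of the survival time are finite under the annealed law: E_o(T(ω)^k) < ∞ for every k ∈ N. -/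
open MeasureTheory ProbabilityTheory
open scoped ENNReal NNReal
open Finset

noncomputable def stepw (q : ℕ) (r : ℝ≥0∞) (u : ℕ) : ℝ≥0∞ :=
  if u % (q+1) < q then r else r⁻¹

lemma walk_len_ge (q : ℕ) (hq : 1 ≤ q) (u : ℕ → ℕ) (n : ℕ) :
    2 * ((Finset.range n).filter (fun j => u j % (q+1) < q)).card
      ≤ (treeWalk q u n).length + n := by
  induction n with
  | zero => simp
  | succ n ih =>
    rw [Finset.range_add_one, Finset.filter_insert]
    have hstep : (treeWalk q u (n+1)).length + 1 ≥ (treeWalk q u n).length ∧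
        ((u n % (q+1) < q) → (treeWalk q u (n+1)).length = (treeWalk q u n).length + 1) := by
      have hw : treeWalk q u (n+1) = treeStep q (treeWalk q u n) (u n) := rfl
      rw [hw]
      cases h : treeWalk q u n with
      | nil =>
        have : u n % q < q := Nat.mod_lt _ (by omega)
        simp [treeStep, this, h]
      | cons a t =>
        by_cases hc : u n % (q+1) < q <;> simp [treeStep, hc, h]
    by_cases hc : u n % (q+1) < q
    · rw [if_pos hc, Finset.card_insert_of_notMem (by simp)]
      have := hstep.2 hc
      omega
    · rw [if_neg hc]
      have := hstep.1
      omega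

lemma visit_drop (q : ℕ) (u : ℕ → ℕ) (n : ℕ) :
    ∀ i, ∃ k ≤ n, treeWalk q u k = (treeWalk q u n).drop i := by
  induction n with
  | zero => intro i; exact ⟨0, le_rfl, by simp [treeWalk]⟩
  | succ n ih =>
    intro i
    show ∃ k ≤ n+1, treeWalk q u k = (treeStep q (treeWalk q u n) (u n)).drop i
    cases h : treeWalk q u n with
    | nil =>
      by_cases hc : u n % q < q
      · match i with
        | 0 => exact ⟨n+1, le_rfl, by simp [treeWalk, h, treeStep, hc]⟩
        | i+1 => exact ⟨0, by omega, by simp [treeWalk, treeStep, hc]⟩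
      · exact ⟨0, by omega, by simp [treeWalk, treeStep, hc]⟩
    | cons a t =>
      by_cases hc : u n % (q+1) < q
      · match i with
        | 0 => exact ⟨n+1, le_rfl, by simp [treeWalk, h, treeStep, hc]⟩
        | i+1 =>
          obtain ⟨k, hk, hw⟩ := ih i
          exact ⟨k, by omega, by rw [hw, h]; simp [treeStep, hc]⟩
      · obtain ⟨k, hk, hw⟩ := ih (i+1)
        exact ⟨k, by omega, by rw [hw, h]; simp [treeStep, hc]⟩

lemma card_bad (q : ℕ) (hq : 1 ≤ q) :
    ((Finset.range (q*(q+1))).filter (fun i => ¬ (i % (q+1) < q))).card = q := by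
  have key : ((Finset.range (q*(q+1))).filter (fun i => ¬ (i % (q+1) < q))).card
      = (Finset.range q).card := by
    apply Finset.card_bij' (fun a _ => a / (q+1)) (fun b _ => b * (q+1) + q)
    · intro a ha
      simp only [Finset.mem_filter, Finset.mem_range] at ha ⊢
      exact Nat.div_lt_of_lt_mul (by rw [Nat.mul_comm (q+1) q]; exact ha.1)
    · intro b hb
      simp only [Finset.mem_filter, Finset.mem_range] at hb ⊢
      have h1 : (b * (q+1) + q) % (q+1) = q := by
        rw [Nat.add_comm, Nat.add_mul_mod_self_right, Nat.mod_eq_of_lt (by omega)]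
      constructor
      · calc b * (q+1) + q < (b+1) * (q+1) := by ring_nf; omega
          _ ≤ q * (q+1) := Nat.mul_le_mul_right _ (by omega)
      · omega
    · intro a ha
      simp only [Finset.mem_filter, Finset.mem_range] at ha
      have hm : a % (q+1) = q := by
        have := Nat.mod_lt a (show 0 < q+1 by omega)
        omega
      have := Nat.div_add_mod a (q+1)
      rw [Nat.mul_comm] at this
      omega
    · intro b hb
      rw [Nat.add_comm, Nat.add_mul_div_right _ _ (by omega : 0 < q+1),
        Nat.div_eq_of_lt (by omega), Nat.zero_add]
  rw [key, Finset.card_range]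

lemma g_lt_one_real (q : ℕ) (hq : 2 ≤ q) (m : ℝ) (hm0 : (2:ℝ)/3 ≤ m) (hm1 : m < 1) :
    ((q*q : ℕ) * m + (q : ℕ) * m⁻¹) * (((q*(q+1) : ℕ) : ℝ))⁻¹ < 1 := by
  have hmpos : (0:ℝ) < m := by linarith
  have hq' : (2:ℝ) ≤ (q:ℝ) := by exact_mod_cast hq
  have hNpos : (0:ℝ) < ((q*(q+1) : ℕ) : ℝ) := by positivity
  rw [← div_eq_mul_inv, div_lt_one hNpos]
  push_cast
  have hminv : m * m⁻¹ = 1 := mul_inv_cancel₀ (ne_of_gt hmpos)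
  have key : (q:ℝ) * ((q:ℝ)*m - 1) * (m - 1) < 0 := by
    apply mul_neg_of_pos_of_neg
    · apply mul_pos (by linarith)
      nlinarith
    · linarith
  nlinarith [key, hminv, mul_pos hmpos hmpos]

lemma tsum_fin (g : ℝ≥0∞) (hg : g < 1) (k : ℕ) :
    (∑' n : ℕ, ((n:ℝ≥0∞)+1)^k * g^n) < ⊤ := by
  have hgt : g ≠ ⊤ := hg.ne_top
  set x : ℝ≥0 := g.toNNReal with hx
  have hgx : g = (x : ℝ≥0∞) := (ENNReal.coe_toNNReal hgt).symm
  have hx1 : (x:ℝ) < 1 := by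
    have h := hg
    rw [hgx] at h
    exact_mod_cast ENNReal.coe_lt_one_iff.mp h
  have hsum : Summable (fun n : ℕ => ((n:ℝ≥0)+1)^k * x^n) := by
    rw [← NNReal.summable_coe]
    push_cast
    by_cases hx0 : (x:ℝ) = 0
    · apply summable_of_ne_finset_zero (s := {0})
      intro n hn
      simp only [Finset.mem_singleton] at hn
      rw [hx0, zero_pow hn, mul_zero]
    · have h1 : Summable (fun n : ℕ => ((n:ℝ))^k * (x:ℝ)^n) :=
        summable_pow_mul_geometric_of_norm_lt_one k
          (by rwa [Real.norm_eq_abs, abs_of_nonneg x.coe_nonneg])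
      have h2 := (summable_nat_add_iff 1).mpr h1
      have h3 := h2.mul_right (x:ℝ)⁻¹
      apply h3.congr
      intro n
      push_cast
      field_simp
      ring
  have hco : ∀ n : ℕ, ((n:ℝ≥0∞)+1)^k * g^n = ((((n:ℝ≥0)+1)^k * x^n : ℝ≥0) : ℝ≥0∞) := by
    intro n
    rw [hgx]
    push_cast
    rfl
  calc (∑' n : ℕ, ((n:ℝ≥0∞)+1)^k * g^n)
      = ∑' n : ℕ, ((((n:ℝ≥0)+1)^k * x^n : ℝ≥0) : ℝ≥0∞) := tsum_congr hco
    _ < ⊤ := by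
        rw [lt_top_iff_ne_top]
        exact ENNReal.tsum_coe_ne_top_iff_summable.mpr hsum

lemma pointwise_prod (q : ℕ) (hq : 1 ≤ q) (r : ℝ≥0∞) (hr0 : r ≠ 0) (hrt : r ≠ ⊤) (hr1 : r ≤ 1)
    (u : ℕ → ℕ) (n : ℕ) :
    r ^ (treeWalk q u n).length ≤ ∏ j ∈ Finset.range n, stepw q r (u j) := by
  have hlen := walk_len_ge q hq u n
  have htot := Finset.card_filter_add_card_filter_not
    (s := Finset.range n) (p := fun j => u j % (q+1) < q)
  rw [Finset.card_range] at htot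
  set Bc := ((Finset.range n).filter (fun j => u j % (q+1) < q)).card with hBc
  have hprod : ∏ j ∈ Finset.range n, stepw q r (u j) = r ^ Bc * (r⁻¹) ^ (n - Bc) := by
    unfold stepw
    rw [Finset.prod_ite, Finset.prod_const, Finset.prod_const]
    congr 2
    omega
  rw [hprod]
  have hexp : Bc ≤ (treeWalk q u n).length + (n - Bc) := by omega
  have h1 : r ^ ((treeWalk q u n).length + (n - Bc)) ≤ r ^ Bc :=
    pow_le_pow_of_le_one (zero_le (a := r)) hr1 hexp
  have h2 : r ^ (treeWalk q u n).length
      = r ^ ((treeWalk q u n).length + (n - Bc)) * (r⁻¹) ^ (n - Bc) := by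
    rw [pow_add, mul_assoc, ← mul_pow, ENNReal.mul_inv_cancel hr0 hrt, one_pow, mul_one]
  rw [h2]
  exact mul_le_mul_left h1 _

lemma suffix_card (q : ℕ) (l : List (Fin q)) :
    ((Finset.range l.length).image (fun i => l.drop i)).card = l.length := by
  rw [Finset.card_image_of_injOn, Finset.card_range]
  intro i hi j hj hij
  simp only [Finset.coe_range, Set.mem_Iio] at hi hj
  have h := congrArg List.length hij
  rw [List.length_drop, List.length_drop] at h
  omega
section
variable {q : ℕ} {Ω₁ : Type} [MeasurableSpace Ω₁]
  {U : ℕ → Ω₁ → Fin (q * (q + 1))}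

lemma walk_meas (hUm : ∀ n, Measurable (U n)) (n : ℕ) (v : List (Fin q)) :
    MeasurableSet {ω₁ | treeWalk q (fun j => (U j ω₁ : ℕ)) n = v} := by
  induction n generalizing v with
  | zero =>
    by_cases h : v = ([] : List (Fin q)) <;>
      simp [treeWalk, h, MeasurableSet.univ]
  | succ n ih =>
    have hset : {ω₁ | treeWalk q (fun j => (U j ω₁ : ℕ)) (n+1) = v}
        = ⋃ (w : List (Fin q)) (i : Fin (q*(q+1))) (_ : treeStep q w (i : ℕ) = v),
            ({ω₁ | treeWalk q (fun j => (U j ω₁ : ℕ)) n = w} ∩ {ω₁ | U n ω₁ = i}) := by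
      ext ω
      simp only [Set.mem_setOf_eq, Set.mem_iUnion, Set.mem_inter_iff]
      constructor
      · intro h
        exact ⟨treeWalk q (fun j => (U j ω : ℕ)) n, U n ω, h, rfl, rfl⟩
      · rintro ⟨w, i, hstep, hw, hU⟩
        show treeStep q (treeWalk q (fun j => (U j ω : ℕ)) n) ((U n ω : ℕ)) = v
        rw [hw, hU]; exact hstep
    rw [hset]
    exact MeasurableSet.iUnion fun w => MeasurableSet.iUnion fun i =>
      MeasurableSet.iUnion fun _ => (ih w).inter (hUm n (measurableSet_singleton i))

lemma step_integral (P₁ : Measure Ω₁) [IsProbabilityMeasure P₁]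
    (hUu : ∀ n i, P₁ {ω | U n ω = i} = ((q * (q + 1) : ℕ) : ℝ≥0∞)⁻¹)
    (r : ℝ≥0∞) (j : ℕ) (hq : 1 ≤ q) (hUm : ∀ n, Measurable (U n)) :
    ∫⁻ ω₁, stepw q r ((U j ω₁ : ℕ)) ∂P₁
      = ((q*q : ℕ) * r + (q : ℕ) * r⁻¹) * (((q*(q+1) : ℕ) : ℝ≥0∞))⁻¹ := by
  have hpt : ∀ ω₁, stepw q r ((U j ω₁ : ℕ))
      = ∑ i : Fin (q*(q+1)), Set.indicator {ω | U j ω = i} (fun _ => stepw q r (i : ℕ)) ω₁ := by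
    intro ω₁
    rw [Finset.sum_eq_single (U j ω₁)]
    · simp [Set.indicator_of_mem, Set.mem_setOf_eq]
    · intro b _ hb
      apply Set.indicator_of_notMem
      simp only [Set.mem_setOf_eq]
      exact fun h => hb h.symm
    · simp
  calc ∫⁻ ω₁, stepw q r ((U j ω₁ : ℕ)) ∂P₁
      = ∫⁻ ω₁, ∑ i : Fin (q*(q+1)),
          Set.indicator {ω | U j ω = i} (fun _ => stepw q r (i : ℕ)) ω₁ ∂P₁ := by
        exact lintegral_congr hpt
    _ = ∑ i : Fin (q*(q+1)), ∫⁻ ω₁,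
          Set.indicator {ω | U j ω = i} (fun _ => stepw q r (i : ℕ)) ω₁ ∂P₁ := by
        apply lintegral_finset_sum
        intro i _
        exact (measurable_const).indicator (hUm j (measurableSet_singleton i))
    _ = ∑ i : Fin (q*(q+1)), stepw q r (i : ℕ) * P₁ {ω | U j ω = i} := by
        refine Finset.sum_congr rfl fun i _ => ?_
        exact lintegral_indicator_const (hUm j (measurableSet_singleton i)) _
    _ = ∑ i : Fin (q*(q+1)), stepw q r (i : ℕ) * (((q*(q+1) : ℕ) : ℝ≥0∞))⁻¹ := by
        simp_rw [hUu j]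
    _ = (∑ i : Fin (q*(q+1)), stepw q r (i : ℕ)) * (((q*(q+1) : ℕ) : ℝ≥0∞))⁻¹ := by
        rw [Finset.sum_mul]
    _ = ((q*q : ℕ) * r + (q : ℕ) * r⁻¹) * (((q*(q+1) : ℕ) : ℝ≥0∞))⁻¹ := by
        congr 1
        rw [Fin.sum_univ_eq_sum_range (fun i => stepw q r i)]
        unfold stepw
        rw [Finset.sum_ite]
        have hbad : ((Finset.range (q*(q+1))).filter (fun i => ¬ (i % (q+1) < q))).card = q :=
          card_bad q hq
        have htot := Finset.card_filter_add_card_filter_not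
          (s := Finset.range (q*(q+1))) (p := fun i => i % (q+1) < q)
        rw [Finset.card_range] at htot
        have hgood : ((Finset.range (q*(q+1))).filter (fun i => i % (q+1) < q)).card = q*q := by
          have hqq : q*(q+1) = q*q + q := by ring
          omega
        rw [Finset.sum_const, Finset.sum_const, hgood, hbad, nsmul_eq_mul, nsmul_eq_mul]

end



/-- If the trapping probabilities satisfy `p_x ≥ p` for all `x ≠ o`, for some
`p > 0`, then all moments of the survival time are finite under the annealed law:
`E_o(T(ω)^k) < ∞` for every `k ∈ ℕ`.  The annealed law is the product of the law `P₁` of the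
driving seeds of the walk (i.i.d. uniform) with the law `P₂` of the trap configuration
(independent over vertices, no trap at the root, trap at `x ≠ o` with probability `px x ≥ p`). -/
theorem annealed_survival_all_moments_finite (q : ℕ) (hq : 2 ≤ q)
    (p : ℝ) (hp : 0 < p) (hp1 : p < 1)
    (px : List (Fin q) → ℝ) (hpx : ∀ x, x ≠ ([] : List (Fin q)) → p ≤ px x)
    (hpx1 : ∀ x, px x ≤ 1)
    (Ω₁ : Type) (_ : MeasurableSpace Ω₁) (P₁ : Measure Ω₁) (_ : IsProbabilityMeasure P₁)
    (U : ℕ → Ω₁ → Fin (q * (q + 1)))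
    (hUm : ∀ n, Measurable (U n))
    (hUi : iIndepFun U P₁)
    (hUu : ∀ n i, P₁ {ω | U n ω = i} = ((q * (q + 1) : ℕ) : ℝ≥0∞)⁻¹)
    (Ω₂ : Type) (_ : MeasurableSpace Ω₂) (P₂ : Measure Ω₂) (_ : IsProbabilityMeasure P₂)
    (τ : List (Fin q) → Ω₂ → Bool)
    (hτm : ∀ x, Measurable (τ x))
    (hτi : iIndepFun τ P₂)
    (hτo : ∀ ω, τ [] ω = false)
    (hτx : ∀ x, x ≠ ([] : List (Fin q)) → P₂ {ω | τ x ω = true} = ENNReal.ofReal (px x)) :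
    ∀ k : ℕ,
      (∫⁻ ω, (treeHit q (fun x => τ x ω.2) (fun j => (U j ω.1 : ℕ))) ^ k ∂(P₁.prod P₂)) < ⊤ := by
  -- basic constants
  have hq1 : 1 ≤ q := by omega
  set m : ℝ := max (1-p) (2/3) with hm
  have hm0 : (2:ℝ)/3 ≤ m := le_max_right _ _
  have hm1 : m < 1 := max_lt (by linarith) (by norm_num)
  have hmpos : (0:ℝ) < m := lt_of_lt_of_le (by norm_num) hm0
  set r : ℝ≥0∞ := ENNReal.ofReal m with hr
  have hr0 : r ≠ 0 := by
    rw [hr, Ne, ENNReal.ofReal_eq_zero]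
    linarith
  have hrt : r ≠ ⊤ := ENNReal.ofReal_ne_top
  have hr1 : r ≤ 1 := by
    rw [hr, ← ENNReal.ofReal_one]
    exact ENNReal.ofReal_le_ofReal hm1.le
  set g : ℝ≥0∞ := ((q*q : ℕ) * r + (q : ℕ) * r⁻¹) * (((q*(q+1) : ℕ) : ℝ≥0∞))⁻¹ with hgdef
  have hNpos : (0:ℝ) < ((q*(q+1) : ℕ) : ℝ) := by positivity
  have hg1 : g < 1 := by
    have hrinv : r⁻¹ = ENNReal.ofReal m⁻¹ := by
      rw [hr, ← ENNReal.ofReal_inv_of_pos hmpos]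
    have hNinv : (((q*(q+1) : ℕ) : ℝ≥0∞))⁻¹ = ENNReal.ofReal ((((q*(q+1) : ℕ) : ℝ))⁻¹) := by
      rw [ENNReal.ofReal_inv_of_pos hNpos, ENNReal.ofReal_natCast]
    have hgof : g = ENNReal.ofReal
        ((((q*q : ℕ) : ℝ) * m + ((q : ℕ) : ℝ) * m⁻¹) * (((q*(q+1) : ℕ) : ℝ))⁻¹) := by
      rw [hgdef, hrinv, hNinv, hr, ← ENNReal.ofReal_natCast (q*q), ← ENNReal.ofReal_natCast q,
        ← ENNReal.ofReal_mul (by positivity), ← ENNReal.ofReal_mul (by positivity),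
        ← ENNReal.ofReal_add (by positivity) (by positivity),
        ← ENNReal.ofReal_mul (by positivity)]
    rw [hgof]
    exact ENNReal.ofReal_lt_one.mpr (g_lt_one_real q hq m hm0 hm1)
  -- the events A n
  set A : ℕ → Set (Ω₁ × Ω₂) := fun n =>
    {ωp | ∀ kk ≤ n, τ (treeWalk q (fun j => (U j ωp.1 : ℕ)) kk) ωp.2 = false} with hAdef
  have hE : ∀ kk : ℕ, MeasurableSet
      {ωp : Ω₁ × Ω₂ | τ (treeWalk q (fun j => (U j ωp.1 : ℕ)) kk) ωp.2 = false} := by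
    intro kk
    have hset : {ωp : Ω₁ × Ω₂ | τ (treeWalk q (fun j => (U j ωp.1 : ℕ)) kk) ωp.2 = false}
        = ⋃ (v : List (Fin q)),
            ({ω₁ | treeWalk q (fun j => (U j ω₁ : ℕ)) kk = v} ×ˢ {ω₂ | τ v ω₂ = false}) := by
      ext ⟨ω₁, ω₂⟩
      simp only [Set.mem_setOf_eq, Set.mem_iUnion, Set.mem_prod]
      constructor
      · intro h
        exact ⟨_, rfl, h⟩
      · rintro ⟨v, hv, h⟩
        exact hv ▸ h
    rw [hset]
    exact MeasurableSet.iUnion fun v =>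
      (walk_meas hUm kk v).prod (hτm v (measurableSet_singleton false))
  have hA : ∀ n, MeasurableSet (A n) := by
    intro n
    have : A n = ⋂ (kk : ℕ) (_ : kk ≤ n),
        {ωp : Ω₁ × Ω₂ | τ (treeWalk q (fun j => (U j ωp.1 : ℕ)) kk) ωp.2 = false} := by
      ext ωp
      simp only [hAdef, Set.mem_setOf_eq, Set.mem_iInter]
    rw [this]
    exact MeasurableSet.iInter fun kk => MeasurableSet.iInter fun _ => hE kk
  -- the probability that a fixed set of non-root vertices is trap-free
  have htrapfree : ∀ (l : List (Fin q)),
      P₂ {ω₂ | ∀ i < l.length, τ (l.drop i) ω₂ = false} ≤ r ^ l.length := by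
    intro l
    set S : Finset (List (Fin q)) := (Finset.range l.length).image (fun i => l.drop i) with hS
    have hSset : {ω₂ | ∀ i < l.length, τ (l.drop i) ω₂ = false}
        = ⋂ s ∈ S, (τ s)⁻¹' {false} := by
      ext ω₂
      simp only [Set.mem_setOf_eq, Set.mem_iInter, hS, Finset.mem_image, Finset.mem_range,
        Set.mem_preimage, Set.mem_singleton_iff]
      constructor
      · rintro h s ⟨i, hi, rfl⟩
        exact h i hi
      · intro h i hi
        exact h _ ⟨i, hi, rfl⟩
    have hmeasS : ∀ s ∈ S, MeasurableSet[MeasurableSpace.comap (τ s) ⊤] ((τ s)⁻¹' {false}) := by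
      intro s _
      exact ⟨{false}, trivial, rfl⟩
    rw [hSset, hτi.meas_biInter hmeasS]
    have hbound : ∀ s ∈ S, P₂ ((τ s)⁻¹' {false}) ≤ r := by
      intro s hsS
      have hsne : s ≠ ([] : List (Fin q)) := by
        simp only [hS, Finset.mem_image, Finset.mem_range] at hsS
        obtain ⟨i, hi, rfl⟩ := hsS
        intro hnil
        have := congrArg List.length hnil
        rw [List.length_drop] at this
        simp at this
        omega
      have hcompl : (τ s)⁻¹' {false} = ((τ s)⁻¹' {true})ᶜ := by
        ext ω₂
        simp only [Set.mem_preimage, Set.mem_singleton_iff, Set.mem_compl_iff]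
        cases τ s ω₂ <;> simp
      rw [hcompl, measure_compl (hτm s (measurableSet_singleton true)) (measure_ne_top _ _),
        measure_univ]
      have htr : P₂ ((τ s)⁻¹' {true}) = ENNReal.ofReal (px s) := hτx s hsne
      rw [htr]
      calc (1 : ℝ≥0∞) - ENNReal.ofReal (px s)
          ≤ 1 - ENNReal.ofReal p :=
            tsub_le_tsub_left (ENNReal.ofReal_le_ofReal (hpx s hsne)) 1
        _ = ENNReal.ofReal (1 - p) := by
            rw [ENNReal.ofReal_sub 1 hp.le, ENNReal.ofReal_one]
        _ ≤ r := by
            rw [hr]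
            exact ENNReal.ofReal_le_ofReal (le_max_left _ _)
    calc ∏ s ∈ S, P₂ ((τ s)⁻¹' {false}) ≤ ∏ s ∈ S, r := Finset.prod_le_prod' hbound
      _ = r ^ S.card := Finset.prod_const r
      _ = r ^ l.length := by rw [hS, suffix_card]
  -- step functions are measurable and independent
  set h : ℕ → Ω₁ → ℝ≥0∞ := fun j ω₁ => stepw q r ((U j ω₁ : ℕ)) with hhdef
  have hhm : ∀ j, Measurable (h j) := fun j =>
    (measurable_of_countable (fun i : Fin (q*(q+1)) => stepw q r (i : ℕ))).comp (hUm j)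
  have hhind : iIndepFun h P₁ :=
    hUi.comp (fun j (i : Fin (q*(q+1))) => stepw q r (i : ℕ))
      (fun j => measurable_of_countable _)
  have hstepint : ∀ j, ∫⁻ ω₁, h j ω₁ ∂P₁ = g := by
    intro j
    rw [hhdef, hgdef]
    exact step_integral P₁ hUu r j hq1 hUm
  have hprodint : ∀ n, ∫⁻ ω₁, ∏ j ∈ Finset.range n, h j ω₁ ∂P₁ = g ^ n := by
    intro n
    induction n with
    | zero => simp
    | succ n ih =>
      have hptw : ∀ ω₁, ∏ j ∈ Finset.range (n+1), h j ω₁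
          = (∏ j ∈ Finset.range n, h j) ω₁ * h n ω₁ := by
        intro ω₁
        rw [Finset.prod_apply]
        exact Finset.prod_range_succ _ _
      have hFm : Measurable (∏ j ∈ Finset.range n, h j) := by
        rw [Finset.prod_fn]
        exact Finset.measurable_prod _ (fun j _ => hhm j)
      rw [lintegral_congr hptw,
        lintegral_mul_eq_lintegral_mul_lintegral_of_indepFun''
          hFm.aemeasurable (hhm n).aemeasurable
          (hhind.indepFun_prod_range_succ hhm n)]
      have : ∫⁻ ω₁, (∏ j ∈ Finset.range n, h j) ω₁ ∂P₁
          = ∫⁻ ω₁, ∏ j ∈ Finset.range n, h j ω₁ ∂P₁ :=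
        lintegral_congr fun ω₁ => by rw [Finset.prod_apply]
      rw [this, ih, hstepint n, pow_succ]
  -- the key estimate
  have hAn : ∀ n, (P₁.prod P₂) (A n) ≤ g ^ n := by
    intro n
    set C : Set (Ω₁ × Ω₂) := {ωp | ∀ i < (treeWalk q (fun j => (U j ωp.1 : ℕ)) n).length,
        τ ((treeWalk q (fun j => (U j ωp.1 : ℕ)) n).drop i) ωp.2 = false} with hCdef
    have hAC : A n ⊆ C := by
      rintro ⟨ω₁, ω₂⟩ hmem i hi
      obtain ⟨kk, hk, hw⟩ := visit_drop q (fun j => (U j ω₁ : ℕ)) n i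
      rw [← hw]
      exact hmem kk hk
    have hCm : MeasurableSet C := by
      have hset : C = ⋃ (v : List (Fin q)),
          ({ω₁ | treeWalk q (fun j => (U j ω₁ : ℕ)) n = v} ×ˢ
            {ω₂ | ∀ i < v.length, τ (v.drop i) ω₂ = false}) := by
        ext ⟨ω₁, ω₂⟩
        simp only [hCdef, Set.mem_setOf_eq, Set.mem_iUnion, Set.mem_prod]
        constructor
        · intro hmem
          exact ⟨_, rfl, hmem⟩
        · rintro ⟨v, hv, hmem⟩
          rw [hv]
          exact hmem
      rw [hset]
      refine MeasurableSet.iUnion fun v => (walk_meas hUm n v).prod ?_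
      have : {ω₂ | ∀ i < v.length, τ (v.drop i) ω₂ = false}
          = ⋂ (i : ℕ) (_ : i < v.length), (τ (v.drop i))⁻¹' {false} := by
        ext ω₂
        simp only [Set.mem_setOf_eq, Set.mem_iInter, Set.mem_preimage, Set.mem_singleton_iff]
      rw [this]
      exact MeasurableSet.iInter fun i => MeasurableSet.iInter fun _ =>
        hτm _ (measurableSet_singleton false)
    calc (P₁.prod P₂) (A n) ≤ (P₁.prod P₂) C := measure_mono hAC
      _ = ∫⁻ ω₁, P₂ (Prod.mk ω₁ ⁻¹' C) ∂P₁ := Measure.prod_apply hCm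
      _ ≤ ∫⁻ ω₁, r ^ (treeWalk q (fun j => (U j ω₁ : ℕ)) n).length ∂P₁ := by
          apply lintegral_mono
          intro ω₁
          exact htrapfree (treeWalk q (fun j => (U j ω₁ : ℕ)) n)
      _ ≤ ∫⁻ ω₁, ∏ j ∈ Finset.range n, h j ω₁ ∂P₁ := by
          apply lintegral_mono
          intro ω₁
          exact pointwise_prod q hq1 r hr0 hrt hr1 _ n
      _ = g ^ n := hprodint n
  -- conclusion
  intro k
  rcases Nat.eq_zero_or_pos k with hk0 | hkpos
  · subst hk0
    simp only [pow_zero, lintegral_one]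
    exact measure_lt_top _ _
  · -- pointwise bound by the tail sum
    have hpt : ∀ ωp : Ω₁ × Ω₂,
        (treeHit q (fun x => τ x ωp.2) (fun j => (U j ωp.1 : ℕ))) ^ k
          ≤ ∑' n : ℕ, ((n : ℝ≥0∞)+1)^k * (A n).indicator 1 ωp := by
      intro ωp
      by_cases hall : ∀ n, ωp ∈ A n
      · refine le_top.trans (le_of_eq ?_)
        have hone : ∀ n : ℕ, (1 : ℝ≥0∞) ≤ ((n : ℝ≥0∞)+1)^k * (A n).indicator 1 ωp := by
          intro n
          rw [Set.indicator_of_mem (hall n)]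
          simp only [Pi.one_apply, mul_one]
          exact one_le_pow_of_one_le' (le_add_self) k
        symm
        rw [eq_top_iff]
        calc (⊤ : ℝ≥0∞) = ∑' _ : ℕ, (1 : ℝ≥0∞) :=
              (ENNReal.tsum_const_eq_top_of_ne_zero one_ne_zero).symm
          _ ≤ _ := ENNReal.tsum_le_tsum hone
      · push_neg at hall
        obtain ⟨n0, hn0⟩ := hall
        have hex : ∃ jj : ℕ, τ (treeWalk q (fun j => (U j ωp.1 : ℕ)) jj) ωp.2 = true := by
          simp only [hAdef, Set.mem_setOf_eq, not_forall] at hn0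
          obtain ⟨kk, hkk, hne⟩ := hn0
          exact ⟨kk, by simpa using hne⟩
        set t := Nat.find hex with ht
        have hhit : treeHit q (fun x => τ x ωp.2) (fun j => (U j ωp.1 : ℕ)) ≤ (t : ℝ≥0∞) :=
          sInf_le ⟨t, rfl, Nat.find_spec hex⟩
        have hLHS : (treeHit q (fun x => τ x ωp.2) (fun j => (U j ωp.1 : ℕ))) ^ k
            ≤ ((t : ℝ≥0∞)) ^ k := pow_le_pow_left' hhit k
        rcases Nat.eq_zero_or_pos t with ht0 | htpos
        · rw [ht0] at hLHS
          simp only [Nat.cast_zero, zero_pow (Nat.pos_iff_ne_zero.mp hkpos)] at hLHS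
          exact le_trans hLHS zero_le
        · obtain ⟨s, hs⟩ := Nat.exists_eq_add_of_lt htpos
          rw [Nat.zero_add] at hs
          -- ωp ∈ A s
          have hmem : ωp ∈ A s := by
            intro kk hkk
            have hlt : kk < t := by omega
            have := Nat.find_min hex hlt
            simpa using this
          calc (treeHit q (fun x => τ x ωp.2) (fun j => (U j ωp.1 : ℕ))) ^ k
              ≤ ((t : ℝ≥0∞)) ^ k := hLHS
            _ = ((s : ℝ≥0∞)+1)^k * (A s).indicator 1 ωp := by
                rw [Set.indicator_of_mem hmem]
                simp only [Pi.one_apply, mul_one, hs]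
                push_cast
                ring
            _ ≤ ∑' n : ℕ, ((n : ℝ≥0∞)+1)^k * (A n).indicator 1 ωp := ENNReal.le_tsum s
    calc ∫⁻ ωp, (treeHit q (fun x => τ x ωp.2) (fun j => (U j ωp.1 : ℕ))) ^ k ∂(P₁.prod P₂)
        ≤ ∫⁻ ωp, ∑' n : ℕ, ((n : ℝ≥0∞)+1)^k * (A n).indicator 1 ωp ∂(P₁.prod P₂) :=
          lintegral_mono hpt
      _ = ∑' n : ℕ, ∫⁻ ωp, ((n : ℝ≥0∞)+1)^k * (A n).indicator 1 ωp ∂(P₁.prod P₂) := by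
          apply lintegral_tsum
          intro n
          exact (measurable_const.mul (measurable_one.indicator (hA n))).aemeasurable
      _ = ∑' n : ℕ, ((n : ℝ≥0∞)+1)^k * (P₁.prod P₂) (A n) := by
          refine tsum_congr fun n => ?_
          rw [lintegral_const_mul _ (measurable_one.indicator (hA n)),
            lintegral_indicator_one (hA n)]
      _ ≤ ∑' n : ℕ, ((n : ℝ≥0∞)+1)^k * g ^ n :=
          ENNReal.tsum_le_tsum fun n => mul_le_mul_right (hAn n) _
      _ < ⊤ := tsum_fin g hg1 k
end
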